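/- Let A, B : Matrix (Fin d) (Fin d) ℂ with A having nonnegative real entries, B positive semidefinite, and B i i = A i i for all i, and let Φ_{A,B} be the associated CDUC map. Then for every vector ψ : Fin d → ℂ, rank Φ_{A,B}(ψψᴴ) ≤ rank Φ_{A,B}(e eᴴ), where e : Fin d → ℂ is the all-ones vector; in particular the maximum of rank Φ_{A,B}(ψψᴴ) over all pure states ψ is attained at the uniform vector e/√d. -/

import Mathlib

open Matrix
open scoped ComplexOrder

/-- The conjugate diagonal unitary covariant (CDUC) map associated with `A`, `B`. -/
noncomputable def cducMap {d : ℕ} (A B : Matrix (Fin d) (Fin d) ℂ)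
    (X : Matrix (Fin d) (Fin d) ℂ) : Matrix (Fin d) (Fin d) ℂ :=
  Matrix.of fun i j => if i = j then ∑ k, A i k * X k k else B i j * X i j

/-- Vectors vanishing on a set of coordinates. -/
noncomputable def vanishOn {d : ℕ} (s : Fin d → Prop) : Submodule ℂ (Fin d → ℂ) where
  carrier := {y | ∀ i, s i → y i = 0}
  add_mem' := fun {x y} hx hy i hi => by simp [hx i hi, hy i hi]
  zero_mem' := fun i _ => rfl
  smul_mem' := fun c {y} hy i hi => by simp [hy i hi]

/-- Coordinate truncation to the zero set of ψ, as a linear map. -/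
noncomputable def qmap {d : ℕ} (ψ : Fin d → ℂ) : (Fin d → ℂ) →ₗ[ℂ] (Fin d → ℂ) where
  toFun y := fun i => if ψ i = 0 then y i else 0
  map_add' := fun x y => by funext i; by_cases h : ψ i = 0 <;> simp [h]
  map_smul' := fun c y => by funext i; by_cases h : ψ i = 0 <;> simp [h]

lemma ker_finrank_le {d : ℕ} (ψ : Fin d → ℂ) (M N : Matrix (Fin d) (Fin d) ℂ)
    (h1 : ∀ y, M *ᵥ y = 0 → N *ᵥ (fun i => if ψ i = 0 then y i else 0) = 0)
    (h2 : ∀ y, M *ᵥ y = 0 → (∀ i, ψ i = 0 → y i = 0) → N *ᵥ y = 0) :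
    Module.finrank ℂ (LinearMap.ker M.mulVecLin) ≤
      Module.finrank ℂ (LinearMap.ker N.mulVecLin) := by
  classical
  set K := LinearMap.ker M.mulVecLin with hK
  set L := LinearMap.ker N.mulVecLin with hL
  set V₁ : Submodule ℂ (Fin d → ℂ) := vanishOn (fun i => ψ i = 0) with hV₁
  set V₂ : Submodule ℂ (Fin d → ℂ) := vanishOn (fun i => ψ i ≠ 0) with hV₂
  set f : K →ₗ[ℂ] (Fin d → ℂ) := (qmap ψ).domRestrict K with hf
  have hmemK : ∀ y : K, M *ᵥ (y : Fin d → ℂ) = 0 := by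
    intro y
    have h : M.mulVecLin ↑y = 0 := y.2
    rwa [Matrix.mulVecLin_apply] at h
  have hrange : LinearMap.range f ≤ L ⊓ V₂ := by
    rintro _ ⟨y, rfl⟩
    refine Submodule.mem_inf.mpr ⟨LinearMap.mem_ker.mpr ?_, ?_⟩
    · rw [Matrix.mulVecLin_apply]
      exact h1 y (hmemK y)
    · intro i hi
      simp [hf, qmap, LinearMap.domRestrict_apply, hi]
  have hkerf : Submodule.map K.subtype (LinearMap.ker f) ≤ L ⊓ V₁ := by
    rintro _ ⟨y, hy, rfl⟩
    replace hy : f y = 0 := hy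
    rw [hf, LinearMap.domRestrict_apply] at hy
    have hvan : ∀ i, ψ i = 0 → (y : Fin d → ℂ) i = 0 := by
      intro i hi
      have := congrFun hy i
      simpa [qmap, hi] using this
    refine Submodule.mem_inf.mpr ⟨LinearMap.mem_ker.mpr ?_, hvan⟩
    rw [Matrix.mulVecLin_apply]
    exact h2 y (hmemK y) hvan
  have e1 : Module.finrank ℂ (LinearMap.range f) + Module.finrank ℂ (LinearMap.ker f)
      = Module.finrank ℂ K := LinearMap.finrank_range_add_finrank_ker f
  have i1 : Module.finrank ℂ (LinearMap.range f) ≤ Module.finrank ℂ (L ⊓ V₂ : Submodule ℂ (Fin d → ℂ)) :=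
    Submodule.finrank_mono hrange
  have i2 : Module.finrank ℂ (LinearMap.ker f)
      = Module.finrank ℂ (Submodule.map K.subtype (LinearMap.ker f)) :=
    (Submodule.finrank_map_subtype_eq K _).symm
  have i3 : Module.finrank ℂ (Submodule.map K.subtype (LinearMap.ker f))
      ≤ Module.finrank ℂ (L ⊓ V₁ : Submodule ℂ (Fin d → ℂ)) := Submodule.finrank_mono hkerf
  have hbot : (L ⊓ V₁) ⊓ (L ⊓ V₂) = ⊥ := by
    rw [eq_bot_iff]
    rintro y ⟨⟨-, hy1⟩, ⟨-, hy2⟩⟩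
    have : y = 0 := by
      funext i
      by_cases hi : ψ i = 0
      · exact hy1 i hi
      · exact hy2 i hi
    simp [this]
  have e2 := Submodule.finrank_sup_add_finrank_inf_eq (L ⊓ V₁) (L ⊓ V₂)
  rw [hbot] at e2
  have i4 : Module.finrank ℂ ((L ⊓ V₁) ⊔ (L ⊓ V₂) : Submodule ℂ (Fin d → ℂ))
      ≤ Module.finrank ℂ L := Submodule.finrank_mono (sup_le inf_le_left inf_le_left)
  simp only [finrank_bot] at e2
  omega

lemma rank_le_rank_of_ker_le {d : ℕ} (M N : Matrix (Fin d) (Fin d) ℂ)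
    (h : Module.finrank ℂ (LinearMap.ker M.mulVecLin) ≤
        Module.finrank ℂ (LinearMap.ker N.mulVecLin)) : N.rank ≤ M.rank := by
  have hM := LinearMap.finrank_range_add_finrank_ker M.mulVecLin
  have hN := LinearMap.finrank_range_add_finrank_ker N.mulVecLin
  have hMr : M.rank = Module.finrank ℂ (LinearMap.range M.mulVecLin) := rfl
  have hNr : N.rank = Module.finrank ℂ (LinearMap.range N.mulVecLin) := rfl
  omega

theorem stmt11 {d : ℕ} (A B : Matrix (Fin d) (Fin d) ℂ)
    (hA : ∀ i j, 0 ≤ (A i j).re ∧ (A i j).im = 0)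
    (hB : B.PosSemidef)
    (hdiag : ∀ i, B i i = A i i) :
    ∀ ψ : Fin d → ℂ,
      (cducMap A B (vecMulVec ψ (star ψ))).rank ≤
        (cducMap A B (vecMulVec (fun _ => 1) (star fun _ => (1 : ℂ)))).rank := by
  classical
  intro ψ
  have hA' : ∀ i j, 0 ≤ A i j := by
    intro i j
    rw [Complex.nonneg_iff]
    exact ⟨(hA i j).1, (hA i j).2.symm⟩
  set M := cducMap A B (vecMulVec (fun _ => 1) (star fun _ => (1 : ℂ))) with hM
  set N := cducMap A B (vecMulVec ψ (star ψ)) with hN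
  set φ : Fin d → ℂ := fun i => if ψ i = 0 then 1 else ψ i with hφ
  have hφ0 : ∀ i, φ i ≠ 0 := by
    intro i
    by_cases h : ψ i = 0 <;> simp [hφ, h]
  set N' : Matrix (Fin d) (Fin d) ℂ :=
    Matrix.of (fun i j => N i j / (φ i * star (φ j))) with hN'
  -- the diagonal correction
  set a : Fin d → ℂ := fun i => ∑ k ∈ Finset.univ.erase i, A i k with ha
  have ha_nonneg : ∀ i, 0 ≤ a i := fun i => Finset.sum_nonneg fun k _ => hA' i k
  have ha_zero : ∀ i, a i = 0 → ∀ k, k ≠ i → A i k = 0 := by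
    intro i h k hk
    exact (Finset.sum_eq_zero_iff_of_nonneg (fun k _ => hA' i k)).mp h k
      (Finset.mem_erase.mpr ⟨hk, Finset.mem_univ k⟩)
  have hMeq : M = B + diagonal a := by
    ext i j
    by_cases hij : i = j
    · subst hij
      have hMii : M i i = ∑ k, A i k := by
        simp [hM, cducMap, vecMulVec_apply]
      rw [hMii, Matrix.add_apply, Matrix.diagonal_apply_eq, hdiag i]
      show ∑ k, A i k = A i i + ∑ k ∈ Finset.univ.erase i, A i k
      exact (Finset.add_sum_erase _ _ (Finset.mem_univ i)).symm
    · simp [hM, cducMap, hij, Matrix.diagonal_apply_ne _ hij, vecMulVec_apply]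
  -- kernel characterization for M
  have hKchar : ∀ y, M *ᵥ y = 0 → B *ᵥ y = 0 ∧ ∀ i, a i * y i = 0 := by
    intro y hy
    have h0 : star y ⬝ᵥ M *ᵥ y = 0 := by rw [hy, dotProduct_zero]
    rw [hMeq, add_mulVec, dotProduct_add] at h0
    have hdiagv : star y ⬝ᵥ (diagonal a *ᵥ y) = ∑ i, a i * (star (y i) * y i) := by
      simp only [dotProduct, mulVec_diagonal, Pi.star_apply]
      exact Finset.sum_congr rfl fun i _ => by ring
    have hterm : ∀ i ∈ Finset.univ, (0 : ℂ) ≤ a i * (star (y i) * y i) :=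
      fun i _ => mul_nonneg (ha_nonneg i) (star_mul_self_nonneg _)
    have hB0 : 0 ≤ star y ⬝ᵥ B *ᵥ y := hB.dotProduct_mulVec_nonneg y
    have hd0 : 0 ≤ star y ⬝ᵥ diagonal a *ᵥ y := by
      rw [hdiagv]; exact Finset.sum_nonneg hterm
    have hboth := (add_eq_zero_iff_of_nonneg hB0 hd0).mp h0
    refine ⟨(hB.dotProduct_mulVec_zero_iff y).mp hboth.1, ?_⟩
    intro i
    have hsum0 : ∑ i, a i * (star (y i) * y i) = 0 := by rw [← hdiagv]; exact hboth.2
    have := (Finset.sum_eq_zero_iff_of_nonneg hterm).mp hsum0 i (Finset.mem_univ i)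
    rcases mul_eq_zero.mp this with h | h
    · rw [h, zero_mul]
    · rcases mul_eq_zero.mp h with h | h
      · rw [star_eq_zero] at h
        rw [h, mul_zero]
      · rw [h, mul_zero]
  -- entry formulas for N
  have hNdiag : ∀ i, N i i = ∑ k, A i k * (ψ k * star (ψ k)) := by
    intro i; simp [hN, cducMap, vecMulVec_apply]
  have hNoff : ∀ i j, i ≠ j → N i j = B i j * (ψ i * star (ψ j)) := by
    intro i j hij; simp [hN, cducMap, hij, vecMulVec_apply]
  -- hypothesis 1 for ker_finrank_le
  have h1 : ∀ y, M *ᵥ y = 0 → N' *ᵥ (fun i => if ψ i = 0 then y i else 0) = 0 := by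
    intro y hy
    obtain ⟨hBy, hay⟩ := hKchar y hy
    funext i
    show ∑ j, N' i j * (if ψ j = 0 then y j else 0) = 0
    apply Finset.sum_eq_zero
    intro j _
    by_cases hj : ψ j = 0
    · rw [if_pos hj]
      by_cases hij : i = j
      · subst hij
        rcases mul_eq_zero.mp (hay i) with hai | hyi
        · have hNii : N i i = 0 := by
            rw [hNdiag]
            apply Finset.sum_eq_zero
            intro k _
            by_cases hk : k = i
            · subst hk; simp [hj]
            · rw [ha_zero i hai k hk]; ring
          simp [hN', hNii]
        · rw [hyi, mul_zero]
      · have : N i j = 0 := by rw [hNoff i j hij]; simp [hj]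
        simp [hN', this]
    · rw [if_neg hj, mul_zero]
  -- hypothesis 2 for ker_finrank_le
  have h2 : ∀ y, M *ᵥ y = 0 → (∀ i, ψ i = 0 → y i = 0) → N' *ᵥ y = 0 := by
    intro y hy hsupp
    obtain ⟨hBy, hay⟩ := hKchar y hy
    funext i
    show ∑ j, N' i j * y j = 0
    by_cases hi : ψ i = 0
    · apply Finset.sum_eq_zero
      intro j _
      by_cases hj : ψ j = 0
      · rw [hsupp j hj, mul_zero]
      · have hij : i ≠ j := fun h => hj (h ▸ hi)
        have : N i j = 0 := by rw [hNoff i j hij]; simp [hi]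
        simp [hN', this]
    · have hstep : ∀ j, N' i j * y j = B i j * y j := by
        intro j
        by_cases hj : ψ j = 0
        · rw [hsupp j hj, mul_zero, mul_zero]
        · by_cases hij : i = j
          · subst hij
            rcases mul_eq_zero.mp (hay i) with hai | hyi
            · have hNii : N i i = A i i * (ψ i * star (ψ i)) := by
                rw [hNdiag]
                rw [Finset.sum_eq_single i]
                · intro k _ hk
                  rw [ha_zero i hai k hk]; ring
                · intro h; exact absurd (Finset.mem_univ i) h
              have hφi : φ i = ψ i := by simp [hφ, hi]
              have hne : ψ i * star (ψ i) ≠ 0 :=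
                mul_ne_zero hi (star_ne_zero.mpr hi)
              have : N' i i = B i i := by
                rw [hN', Matrix.of_apply, hNii, hφi, hdiag i,
                  mul_div_assoc, div_self hne, mul_one]
              rw [this]
            · rw [hyi, mul_zero, mul_zero]
          · have hφi : φ i = ψ i := by simp [hφ, hi]
            have hφj : φ j = ψ j := by simp [hφ, hj]
            have hne : ψ i * star (ψ j) ≠ 0 :=
              mul_ne_zero hi (star_ne_zero.mpr hj)
            have : N' i j = B i j := by
              rw [hN', Matrix.of_apply, hNoff i j hij, hφi, hφj,
                mul_div_assoc, div_self hne, mul_one]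
            rw [this]
      calc ∑ j, N' i j * y j = ∑ j, B i j * y j := Finset.sum_congr rfl fun j _ => hstep j
        _ = (B *ᵥ y) i := rfl
        _ = 0 := by rw [hBy]; rfl
  -- assemble
  have hker := ker_finrank_le ψ M N' h1 h2
  have hrank' : N'.rank ≤ M.rank := rank_le_rank_of_ker_le M N' hker
  have hfac : N = diagonal φ * N' * diagonal (star φ) := by
    ext i j
    rw [Matrix.mul_diagonal, Matrix.diagonal_mul, Pi.star_apply, hN', Matrix.of_apply]
    have h1' : φ i ≠ 0 := hφ0 i
    have h2' : star (φ j) ≠ 0 := star_ne_zero.mpr (hφ0 j)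
    have heq : φ i * (N i j / (φ i * star (φ j))) * star (φ j)
        = (N i j * (φ i * star (φ j))) / (φ i * star (φ j)) := by ring
    rw [heq, mul_div_cancel_right₀ _ (mul_ne_zero h1' h2')]
  have hdet : IsUnit (diagonal φ).det ∧ IsUnit (diagonal (star φ)).det := by
    constructor <;>
    · rw [Matrix.det_diagonal, isUnit_iff_ne_zero]
      refine Finset.prod_ne_zero_iff.mpr fun i _ => ?_
      first
        | exact hφ0 i
        | exact star_ne_zero.mpr (hφ0 i)
  calc N.rank = (diagonal φ * N' * diagonal (star φ)).rank := by rw [← hfac]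
    _ = (diagonal φ * N').rank := Matrix.rank_mul_eq_left_of_isUnit_det _ _ hdet.2
    _ = N'.rank := Matrix.rank_mul_eq_right_of_isUnit_det _ _ hdet.1
    _ ≤ M.rank := hrank'
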